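/- Partitioning lemma (Lemma 1): Let E be a real normed vector space, let T ≥ 1, let z_1,…,z_T ∈ E, let V̄ > 0, and let V = ∑_{t=2}^T ‖z_t − z_{t−1}‖ be the path variation of the sequence. Then there exist M ≥ 1 and indices 0 = b_0 < b_1 < ⋯ < b_M = T partitioning {1,…,T} into M consecutive intervals [b_{i−1}+1, b_i] (i = 1,…,M) such that: (a) for every i, the within-interval variation satisfies ∑_{j=b_{i−1}+2}^{b_i} ‖z_j − z_{j−1}‖ ≤ V̄, and (b) M ≤ V/V̄ + 1. -/

import Mathlib

private lemma sum_Icc_shift {E : Type*} [NormedAddCommGroup E]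
    (z : ℕ → E) (a c s : ℕ) (ha : 1 ≤ a) :
    ∑ j ∈ Finset.Icc (a + s) (c + s), ‖z j - z (j - 1)‖
      = ∑ j ∈ Finset.Icc a c, ‖z (j + s) - z (j + s - 1)‖ := by
  rw [← Finset.map_add_right_Icc, Finset.sum_map]
  rfl

private lemma aux_partition {E : Type*} [NormedAddCommGroup E]
    (Vbar : ℝ) (hVbar : 0 < Vbar) :
    ∀ T, 1 ≤ T → ∀ z : ℕ → E, ∃ (M : ℕ) (b : ℕ → ℕ), 1 ≤ M ∧ b 0 = 0 ∧ b M = T ∧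
      (∀ i < M, b i < b (i + 1)) ∧
      (∀ i < M, ∑ j ∈ Finset.Icc (b i + 2) (b (i + 1)), ‖z j - z (j - 1)‖ ≤ Vbar) ∧
      ((M : ℝ) - 1) * Vbar ≤ ∑ t ∈ Finset.Icc 2 T, ‖z t - z (t - 1)‖ := by
  intro T
  induction T using Nat.strong_induction_on with
  | _ T ih =>
    intro hT z
    classical
    by_cases hV : ∑ t ∈ Finset.Icc 2 T, ‖z t - z (t - 1)‖ ≤ Vbar
    · refine ⟨1, fun i => if i = 0 then 0 else T, le_refl 1, by simp, by simp, ?_, ?_, ?_⟩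
      · intro i hi
        interval_cases i
        simpa using (show 0 < T by omega)
      · intro i hi
        interval_cases i
        simpa using hV
      · simp only [Nat.cast_one, sub_self, zero_mul]
        exact Finset.sum_nonneg fun _ _ => norm_nonneg _
    · push_neg at hV
      -- find the smallest e with variation over [2, e] exceeding Vbar
      have hex : ∃ e, Vbar < ∑ j ∈ Finset.Icc 2 e, ‖z j - z (j - 1)‖ := ⟨T, hV⟩
      set e := Nat.find hex with he_def
      have hPe : Vbar < ∑ j ∈ Finset.Icc 2 e, ‖z j - z (j - 1)‖ := Nat.find_spec hex
      have heT : e ≤ T := Nat.find_min' hex hV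
      have he2 : 2 ≤ e := by
        by_contra h
        push_neg at h
        have : Finset.Icc 2 e = ∅ := Finset.Icc_eq_empty (by omega)
        rw [this] at hPe
        simp at hPe
        linarith
      set s := e - 1 with hs_def
      have hs1 : 1 ≤ s := by omega
      have hes : e = s + 1 := by omega
      have hprev : ∑ j ∈ Finset.Icc 2 s, ‖z j - z (j - 1)‖ ≤ Vbar := by
        have := Nat.find_min hex (m := s) (by omega)
        push_neg at this
        exact this
      have hsT : s < T := by omega
      obtain ⟨M', b', hM', hb0, hbM, hmono, hivar, hbound⟩ :=
        ih (T - s) (by omega) (by omega) (fun t => z (t + s))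
      refine ⟨M' + 1, fun i => if i = 0 then 0 else b' (i - 1) + s, by omega, by simp, ?_,
        ?_, ?_, ?_⟩
      · simp only [Nat.add_sub_cancel, if_neg (by omega : M' + 1 ≠ 0)]
        omega
      · intro i hi
        rcases Nat.eq_zero_or_pos i with h0 | h0
        · subst h0
          simp [hb0]
          omega
        · obtain ⟨k, rfl⟩ : ∃ k, i = k + 1 := ⟨i - 1, by omega⟩
          have := hmono k (by omega)
          simp only [if_neg (by omega : k + 1 ≠ 0), if_neg (by omega : k + 1 + 1 ≠ 0),
            Nat.add_sub_cancel]
          omega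
      · intro i hi
        rcases Nat.eq_zero_or_pos i with h0 | h0
        · subst h0
          simpa [hb0] using hprev
        · obtain ⟨k, rfl⟩ : ∃ k, i = k + 1 := ⟨i - 1, by omega⟩
          simp only [if_neg (by omega : k + 1 ≠ 0), if_neg (by omega : k + 1 + 1 ≠ 0),
            Nat.add_sub_cancel]
          have hre : ∑ j ∈ Finset.Icc (b' k + s + 2) (b' (k + 1) + s), ‖z j - z (j - 1)‖
              = ∑ j ∈ Finset.Icc (b' k + 2) (b' (k + 1)), ‖z (j + s) - z (j + s - 1)‖ := by
            have := sum_Icc_shift z (b' k + 2) (b' (k + 1)) s (by omega)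
            rw [← this]
            ring_nf
          rw [hre]
          have := hivar k (by omega)
          refine le_trans (le_of_eq ?_) this
          apply Finset.sum_congr rfl
          intro j hj
          simp only [Finset.mem_Icc] at hj
          have h1 : j + s - 1 = j - 1 + s := by omega
          rw [h1]
      · have hV'eq : ∑ t ∈ Finset.Icc 2 (T - s), ‖z (t + s) - z (t + s - 1)‖
            = ∑ j ∈ Finset.Icc (s + 2) T, ‖z j - z (j - 1)‖ := by
          rw [← sum_Icc_shift z 2 (T - s) s (by omega)]
          congr 1
          · congr 1 <;> omega
        have hbound' : ((M' : ℝ) - 1) * Vbar ≤ ∑ j ∈ Finset.Icc (s + 2) T, ‖z j - z (j - 1)‖ := by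
          rw [← hV'eq]
          refine le_trans hbound (le_of_eq ?_)
          apply Finset.sum_congr rfl
          intro j hj
          simp only [Finset.mem_Icc] at hj
          have h1 : j + s - 1 = j - 1 + s := by omega
          rw [h1]
        have hsplit : ∑ t ∈ Finset.Icc 2 T, ‖z t - z (t - 1)‖
            = (∑ j ∈ Finset.Icc 2 (s + 1), ‖z j - z (j - 1)‖)
              + ∑ j ∈ Finset.Icc (s + 2) T, ‖z j - z (j - 1)‖ := by
          rw [show (2:ℕ) = 1 + 1 from rfl, Finset.Icc_add_one_left_eq_Ioc, Finset.Icc_add_one_left_eq_Ioc,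
            show s + 2 = (s + 1) + 1 from rfl, Finset.Icc_add_one_left_eq_Ioc]
          exact (Finset.sum_Ioc_consecutive _ (by omega) (by omega)).symm
        rw [hsplit]
        have : Vbar < ∑ j ∈ Finset.Icc 2 (s + 1), ‖z j - z (j - 1)‖ := hes ▸ hPe
        push_cast
        nlinarith

/-- Partitioning lemma (Lemma 1): the sequence `z 1, …, z T` can be partitioned into
`M` consecutive intervals `[b (i-1) + 1, b i]` whose within-interval path variation is at
most `Vbar`, with `M ≤ V / Vbar + 1` where `V` is the total path variation. -/
theorem partitioning_lemma {E : Type*} [NormedAddCommGroup E] [NormedSpace ℝ E]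
    (T : ℕ) (hT : 1 ≤ T) (z : ℕ → E) (Vbar : ℝ) (hVbar : 0 < Vbar) :
    ∃ (M : ℕ) (b : ℕ → ℕ), 1 ≤ M ∧ b 0 = 0 ∧ b M = T ∧
      (∀ i < M, b i < b (i + 1)) ∧
      (∀ i < M, ∑ j ∈ Finset.Icc (b i + 2) (b (i + 1)), ‖z j - z (j - 1)‖ ≤ Vbar) ∧
      (M : ℝ) ≤ (∑ t ∈ Finset.Icc 2 T, ‖z t - z (t - 1)‖) / Vbar + 1 := by
  obtain ⟨M, b, h1, h2, h3, h4, h5, h6⟩ := aux_partition Vbar hVbar T hT z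
  refine ⟨M, b, h1, h2, h3, h4, h5, ?_⟩
  rw [← sub_le_iff_le_add, le_div_iff₀ hVbar]
  exact h6
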